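/- For all natural numbers n > 2, the sum over k from 1 to n of (-1)^k·C(n,k)·k²·H_k² equals n/((n-1)(n-2))·(H_n - (2n³+n²-11n+6)/(n(n-1)(n-2))). -/

import Mathlib

open Finset BigOperators

def H (n : ℕ) : ℚ := ∑ i ∈ Finset.range n, 1 / (i + 1 : ℚ)

def H2 (n : ℕ) : ℚ := ∑ i ∈ Finset.range n, 1 / ((i + 1 : ℚ))^2

def Sg (f : ℕ → ℚ) (n : ℕ) : ℚ :=
  ∑ k ∈ Finset.range (n+1), (-1:ℚ)^k * (n.choose k : ℚ) * f k

lemma Hsucc (k : ℕ) : H (k+1) = H k + 1/((k:ℚ)+1) := by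
  simp [H, Finset.sum_range_succ]

lemma Sg_congr {f g : ℕ → ℚ} (h : ∀ k, f k = g k) (n : ℕ) : Sg f n = Sg g n := by
  unfold Sg; exact Finset.sum_congr rfl fun k _ => by rw [h k]

lemma Sg_add (f g : ℕ → ℚ) (n : ℕ) :
    Sg (fun k => f k + g k) n = Sg f n + Sg g n := by
  unfold Sg
  rw [← Finset.sum_add_distrib]
  exact Finset.sum_congr rfl fun k _ => by ring

lemma Sg_sub (f g : ℕ → ℚ) (n : ℕ) :
    Sg (fun k => f k - g k) n = Sg f n - Sg g n := by
  unfold Sg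
  rw [← Finset.sum_sub_distrib]
  exact Finset.sum_congr rfl fun k _ => by ring

lemma Sg_diff (f : ℕ → ℚ) (m : ℕ) :
    Sg f (m+1) = Sg f m - Sg (fun k => f (k+1)) m := by
  unfold Sg
  rw [Finset.sum_range_succ' (fun k => (-1:ℚ)^k * ((m+1).choose k : ℚ) * f k) (m+1)]
  have hchoose : ∀ k : ℕ, (((m+1).choose (k+1) : ℕ) : ℚ)
      = (m.choose k : ℚ) + (m.choose (k+1) : ℚ) := by
    intro k
    exact_mod_cast congrArg (Nat.cast (R := ℚ)) (Nat.choose_succ_succ m k)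
  have hsplit : ∑ k ∈ Finset.range (m+1), (-1:ℚ)^(k+1) * ((m+1).choose (k+1) : ℚ) * f (k+1)
      = (∑ k ∈ Finset.range (m+1), -((-1:ℚ)^k * (m.choose k : ℚ) * f (k+1)))
        + ∑ k ∈ Finset.range (m+1), (-1:ℚ)^(k+1) * (m.choose (k+1) : ℚ) * f (k+1) := by
    rw [← Finset.sum_add_distrib]
    refine Finset.sum_congr rfl fun k _ => ?_
    rw [hchoose]; ring
  have hB : ∑ k ∈ Finset.range (m+1), (-1:ℚ)^(k+1) * (m.choose (k+1) : ℚ) * f (k+1)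
      = (∑ k ∈ Finset.range (m+1), (-1:ℚ)^k * (m.choose k : ℚ) * f k) - f 0 := by
    have h2 := Finset.sum_range_succ' (fun k => (-1:ℚ)^k * (m.choose k : ℚ) * f k) (m+1)
    have h3 : ∑ k ∈ Finset.range (m+1+1), (-1:ℚ)^k * (m.choose k : ℚ) * f k
        = ∑ k ∈ Finset.range (m+1), (-1:ℚ)^k * (m.choose k : ℚ) * f k := by
      rw [Finset.sum_range_succ]
      simp [Nat.choose_succ_self]
    simp only [h3, pow_zero, Nat.choose_zero_right, Nat.cast_one, one_mul] at h2
    linarith [h2]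
  rw [hsplit, hB, Finset.sum_neg_distrib]
  simp only [pow_zero, Nat.choose_zero_right, Nat.cast_one, one_mul]
  ring

lemma Salt (m : ℕ) : Sg (fun _ => (1:ℚ)) (m+1) = 0 := by
  rw [Sg_diff]; ring

lemma absorb_sum (n : ℕ) (g : ℕ → ℚ) :
    ((n:ℚ)+1) * Sg (fun k => g (k+1) / ((k:ℚ)+1)) n = g 0 - Sg g (n+1) := by
  unfold Sg
  rw [Finset.mul_sum]
  have hterm : ∀ k ∈ Finset.range (n+1),
      ((n:ℚ)+1) * ((-1:ℚ)^k * (n.choose k : ℚ) * (g (k+1) / ((k:ℚ)+1)))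
      = -((-1:ℚ)^(k+1) * (((n+1).choose (k+1) : ℕ) : ℚ) * g (k+1)) := by
    intro k _
    have habs : (((n+1).choose (k+1) : ℕ) : ℚ) * ((k:ℚ)+1) = ((n:ℚ)+1) * (n.choose k : ℚ) := by
      have := Nat.add_one_mul_choose_eq n k
      have h2 : ((Nat.succ n * n.choose k : ℕ) : ℚ) = (((n+1).choose (k+1) * (k+1) : ℕ) : ℚ) := by
        exact_mod_cast congrArg (Nat.cast (R := ℚ)) this
      push_cast at h2
      linarith [h2]
    have hk : ((k:ℚ)+1) ≠ 0 := by positivity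
    field_simp
    linear_combination (-(-1:ℚ)^k * g (k+1)) * habs
  rw [Finset.sum_congr rfl hterm]
  rw [Finset.sum_range_succ' (fun j => (-1:ℚ)^j * ((n+1).choose j : ℚ) * g j) (n+1)]
  simp only [pow_zero, Nat.choose_zero_right, Nat.cast_one, one_mul]
  rw [Finset.sum_neg_distrib]
  ring

lemma Sg_cmul (c : ℚ) (f : ℕ → ℚ) (n : ℕ) :
    Sg (fun k => c * f k) n = c * Sg f n := by
  unfold Sg
  rw [Finset.mul_sum]
  exact Finset.sum_congr rfl fun k _ => by ring

lemma Linv (n : ℕ) : Sg (fun k => 1/((k:ℚ)+1)) n = 1/((n:ℚ)+1) := by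
  have hne : ((n:ℚ)+1) ≠ 0 := by positivity
  apply mul_left_cancel₀ hne
  have h := absorb_sum n (fun _ => (1:ℚ))
  rw [Salt n] at h
  rw [h]; field_simp; norm_num

lemma LoverJ : ∀ n : ℕ, Sg (fun j => 1/(j:ℚ)) n = -H n
  | 0 => by simp [Sg, H]
  | (n+1) => by
      rw [Sg_diff, LoverJ n, Hsucc]
      have : Sg (fun k => 1/(((k+1:ℕ)):ℚ)) n = Sg (fun k => 1/((k:ℚ)+1)) n := by
        refine Sg_congr (fun k => ?_) n
        push_cast; ring
      rw [this, Linv]; ring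

lemma Linv2 (n : ℕ) : Sg (fun k => 1/((k:ℚ)+1)^2) n = H (n+1)/((n:ℚ)+1) := by
  have hne : ((n:ℚ)+1) ≠ 0 := by positivity
  apply mul_left_cancel₀ hne
  have h := absorb_sum n (fun j => 1/(j:ℚ))
  rw [LoverJ (n+1)] at h
  have h2 : Sg (fun k => 1/(((k+1:ℕ)):ℚ) / ((k:ℚ)+1)) n = Sg (fun k => 1/((k:ℚ)+1)^2) n := by
    refine Sg_congr (fun k => ?_) n
    have hk : ((k:ℚ)+1) ≠ 0 := by positivity
    push_cast; field_simp
  rw [h2] at h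
  rw [h]; push_cast; field_simp; simp

lemma LH (m : ℕ) : Sg H (m+1) = -1/((m:ℚ)+1) := by
  rw [Sg_diff]
  have h2 : Sg (fun k => H (k+1)) m = Sg (fun k => H k + 1/((k:ℚ)+1)) m :=
    Sg_congr (fun k => Hsucc k) m
  rw [h2, Sg_add, Linv]; ring

lemma LHdiv (n : ℕ) :
    Sg (fun k => H k/((k:ℚ)+1)) n = 1/((n:ℚ)+1)^2 - H (n+1)/((n:ℚ)+1) := by
  have hne : ((n:ℚ)+1) ≠ 0 := by positivity
  apply mul_left_cancel₀ hne
  have h := absorb_sum n (fun j => H j - 1/(j:ℚ))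
  have h2 : Sg (fun k => (H (k+1) - 1/(((k+1:ℕ)):ℚ)) / ((k:ℚ)+1)) n
      = Sg (fun k => H k/((k:ℚ)+1)) n := by
    refine Sg_congr (fun k => ?_) n
    rw [Hsucc]; push_cast; ring
  rw [h2] at h
  rw [Sg_sub, LH n, LoverJ (n+1)] at h
  have h0 : H 0 - 1/((0:ℕ):ℚ) = 0 := by simp [H]
  rw [h0] at h
  rw [h]; field_simp; ring

lemma LB (m : ℕ) :
    Sg (fun k => H k^2) (m+1) = H (m+1)/((m:ℚ)+1) - 2/((m:ℚ)+1)^2 := by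
  rw [Sg_diff]
  have h2 : Sg (fun k => H (k+1)^2) m
      = Sg (fun k => H k^2 + (2 * (H k/((k:ℚ)+1)) + 1/((k:ℚ)+1)^2)) m := by
    refine Sg_congr (fun k => ?_) m
    have hk : ((k:ℚ)+1) ≠ 0 := by positivity
    rw [Hsucc]; field_simp; ring
  rw [h2, Sg_add, Sg_add, Sg_cmul, LHdiv, Linv2]
  ring

lemma LU (m : ℕ) : Sg (fun k => (k:ℚ) * H k) (m+2) = 1/((m:ℚ)+1) := by
  rw [Sg_diff]
  have h2 : Sg (fun k => ((k+1:ℕ):ℚ) * H (k+1)) (m+1)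
      = Sg (fun k => (k:ℚ) * H k + (H k + 1)) (m+1) := by
    refine Sg_congr (fun k => ?_) (m+1)
    have hk : ((k:ℚ)+1) ≠ 0 := by positivity
    rw [Hsucc]; push_cast; field_simp; ring
  rw [h2, Sg_add, Sg_add, LH m, Salt m]
  ring

lemma LTT (m : ℕ) : Sg (fun k => (k:ℚ) * H k^2) (m+2)
    = -(H (m+1)/((m:ℚ)+1) - 2/((m:ℚ)+1)^2 - 2/((m:ℚ)+1) + 1/((m:ℚ)+2)) := by
  rw [Sg_diff]
  have h2 : Sg (fun k => ((k+1:ℕ):ℚ) * H (k+1)^2) (m+1)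
      = Sg (fun k => (k:ℚ) * H k^2 + (H k^2 + (2 * H k + 1/((k:ℚ)+1)))) (m+1) := by
    refine Sg_congr (fun k => ?_) (m+1)
    have hk : ((k:ℚ)+1) ≠ 0 := by positivity
    rw [Hsucc]; push_cast; field_simp; ring
  rw [h2, Sg_add, Sg_add, Sg_add, Sg_cmul, LB m, LH m, Linv (m+1)]
  push_cast; ring

lemma LS (m : ℕ) : Sg (fun k => (k:ℚ)^2 * H k^2) (m+3)
    = -(2 * Sg (fun k => (k:ℚ) * H k^2) (m+2) + Sg (fun k => H k^2) (m+2)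
        + 2 * Sg (fun k => (k:ℚ) * H k) (m+2) + 2 * Sg H (m+2)) := by
  rw [Sg_diff]
  have h2 : Sg (fun k => ((k+1:ℕ):ℚ)^2 * H (k+1)^2) (m+2)
      = Sg (fun k => (k:ℚ)^2 * H k^2 + (2 * ((k:ℚ) * H k^2) + (H k^2
          + (2 * ((k:ℚ) * H k) + (2 * H k + 1))))) (m+2) := by
    refine Sg_congr (fun k => ?_) (m+2)
    have hk : ((k:ℚ)+1) ≠ 0 := by positivity
    rw [Hsucc]; push_cast; field_simp; ring
  rw [h2, Sg_add, Sg_add, Sg_add, Sg_add, Sg_add, Sg_cmul, Sg_cmul, Sg_cmul]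
  have := Salt (m+1)
  push_cast at this ⊢
  rw [this]
  ring

theorem stmt19 (n : ℕ) (hn : 2 < n) :
    ∑ k ∈ Finset.Icc 1 n, (-1 : ℚ)^k * (n.choose k : ℚ) * (k : ℚ)^2 * H k^2
      = (n : ℚ) / (((n : ℚ) - 1) * ((n : ℚ) - 2))
          * (H n - (2 * (n : ℚ)^3 + (n : ℚ)^2 - 11 * n + 6) / (n * ((n : ℚ) - 1) * ((n : ℚ) - 2))) := by
  obtain ⟨m, rfl⟩ : ∃ m, n = m + 3 := ⟨n - 3, by omega⟩
  have hsub : Finset.Icc 1 (m+3) ⊆ Finset.range (m+3+1) := by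
    intro x hx
    simp only [Finset.mem_Icc] at hx
    simp only [Finset.mem_range]
    omega
  have h0 : ∀ x ∈ Finset.range (m+3+1), x ∉ Finset.Icc 1 (m+3) →
      (-1:ℚ)^x * ((m+3).choose x : ℚ) * ((x:ℚ)^2 * H x^2) = 0 := by
    intro x hx hnx
    simp only [Finset.mem_range] at hx
    simp only [Finset.mem_Icc, not_and, not_le] at hnx
    have hx0 : x = 0 := by omega
    subst hx0
    norm_num
  have hL : ∑ k ∈ Finset.Icc 1 (m+3), (-1 : ℚ)^k * ((m+3).choose k : ℚ) * (k : ℚ)^2 * H k^2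
      = Sg (fun k => (k:ℚ)^2 * H k^2) (m+3) := by
    unfold Sg
    rw [← Finset.sum_subset hsub h0]
    exact Finset.sum_congr rfl fun k _ => by ring
  rw [hL, LS, LTT m, LB (m+1), LU m, LH (m+1)]
  simp only [show m+1+1 = m+2 from rfl, show m+2+1 = m+3 from rfl]
  have e2 : H (m+2) = H (m+1) + 1/((m:ℚ)+2) := by
    rw [show m+2 = m+1+1 from rfl, Hsucc]; push_cast; ring
  have e3 : H (m+3) = H (m+1) + 1/((m:ℚ)+2) + 1/((m:ℚ)+3) := by
    rw [show m+3 = m+2+1 from rfl, Hsucc, e2]; push_cast; ring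
  rw [e3, e2]
  have h1 : ((m:ℚ)+1) ≠ 0 := by positivity
  have h2 : ((m:ℚ)+2) ≠ 0 := by positivity
  have h3 : ((m:ℚ)+3) ≠ 0 := by positivity
  push_cast
  have hA : ((m:ℚ)+3) - 1 = (m:ℚ)+2 := by ring
  have hB : ((m:ℚ)+3) - 2 = (m:ℚ)+1 := by ring
  rw [hA, hB]
  field_simp
  ring
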